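/- Let E be a 3-dimensional F₂-vector space and ℱ the set of 8 subgroups of order 7 of GL(E). For distinct M₁, M₂ ∈ ℱ, define vec(M₁,M₂) ∈ E to be the unique nonzero vector fixed by the order-3 elements of N(M₁) ∩ N(M₂), and vec(M,M) = 0. Then for any three elements M, M₁, M₂ of ℱ, vec(M₁,M₂) = vec(M₁,M) + vec(M,M₂) (Chasles relation), so ℱ is an F₂-affine space of dimension 3 with vector space E. -/

import Mathlib

/- Auxiliary material for stmt_16 -/

abbrev V3 := Fin 3 → ZMod 2
abbrev Mat3 := Matrix (Fin 3) (Fin 3) (ZMod 2)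

def gmat : Fin 8 → Mat3 :=
  ![!![0, 0, 1; 0, 1, 1; 1, 1, 0], !![0, 0, 1; 0, 1, 1; 1, 1, 1], !![0, 0, 1; 1, 0, 0; 0, 1, 1], !![0, 0, 1; 1, 0, 0; 1, 1, 0], !![0, 0, 1; 1, 0, 1; 0, 1, 0], !![0, 0, 1; 1, 0, 1; 1, 1, 1], !![0, 0, 1; 1, 1, 0; 0, 1, 0], !![0, 0, 1; 1, 1, 0; 0, 1, 1]]

def tmat : Fin 8 → Fin 8 → Mat3 :=
  ![ ![1, !![0, 0, 1; 1, 0, 0; 0, 1, 0], !![1, 0, 0; 1, 1, 1; 1, 1, 0], !![1, 1, 0; 1, 0, 0; 1, 1, 1], !![0, 0, 1; 1, 1, 1; 1, 0, 1], !![1, 1, 0; 0, 0, 1; 0, 1, 1], !![0, 1, 1; 1, 1, 0; 0, 0, 1], !![0, 1, 1; 0, 1, 0; 1, 1, 1]],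
     ![!![0, 0, 1; 1, 0, 0; 0, 1, 0], 1, !![0, 0, 1; 1, 1, 0; 1, 0, 1], !![1, 0, 0; 0, 1, 1; 1, 1, 0], !![0, 1, 1; 1, 1, 1; 0, 0, 1], !![1, 1, 1; 0, 1, 0; 1, 1, 0], !![1, 1, 1; 0, 0, 1; 0, 1, 1], !![0, 1, 0; 1, 1, 0; 1, 1, 1]],
     ![!![1, 0, 0; 1, 1, 1; 1, 1, 0], !![0, 0, 1; 1, 1, 0; 1, 0, 1], 1, !![1, 1, 0; 0, 1, 1; 0, 1, 0], !![1, 1, 1; 0, 1, 0; 1, 0, 0], !![0, 1, 0; 1, 1, 0; 0, 0, 1], !![0, 1, 1; 1, 0, 0; 1, 1, 0], !![0, 1, 1; 1, 0, 1; 0, 1, 0]],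
     ![!![1, 1, 0; 1, 0, 0; 1, 1, 1], !![1, 0, 0; 0, 1, 1; 1, 1, 0], !![1, 0, 1; 0, 0, 1; 0, 1, 1], 1, !![0, 1, 1; 0, 0, 1; 1, 1, 0], !![0, 1, 1; 1, 0, 1; 1, 0, 0], !![0, 0, 1; 0, 1, 0; 1, 0, 1], !![1, 1, 1; 1, 0, 0; 0, 0, 1]],
     ![!![0, 0, 1; 1, 1, 1; 1, 0, 1], !![0, 1, 1; 1, 1, 1; 0, 0, 1], !![1, 1, 1; 0, 1, 0; 1, 0, 0], !![0, 1, 1; 0, 0, 1; 1, 1, 0], 1, !![0, 1, 0; 1, 0, 1; 1, 1, 0], !![1, 1, 0; 1, 0, 0; 1, 0, 1], !![1, 0, 0; 0, 0, 1; 0, 1, 1]],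
     ![!![1, 1, 0; 0, 0, 1; 0, 1, 1], !![1, 1, 1; 0, 1, 0; 1, 1, 0], !![0, 1, 0; 1, 1, 0; 0, 0, 1], !![0, 1, 1; 1, 0, 1; 1, 0, 0], !![0, 1, 0; 1, 0, 1; 1, 1, 0], 1, !![1, 0, 0; 0, 0, 1; 1, 1, 1], !![1, 0, 1; 1, 1, 0; 1, 0, 0]],
     ![!![0, 1, 1; 1, 1, 0; 0, 0, 1], !![1, 1, 1; 0, 0, 1; 0, 1, 1], !![0, 1, 1; 1, 0, 0; 1, 1, 0], !![0, 0, 1; 0, 1, 0; 1, 0, 1], !![1, 1, 0; 1, 0, 0; 1, 0, 1], !![1, 0, 0; 0, 0, 1; 1, 1, 1], 1, !![1, 1, 0; 1, 1, 1; 1, 0, 0]],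
     ![!![0, 1, 1; 0, 1, 0; 1, 1, 1], !![0, 1, 0; 1, 1, 0; 1, 1, 1], !![0, 1, 1; 1, 0, 1; 0, 1, 0], !![1, 1, 1; 1, 0, 0; 0, 0, 1], !![1, 0, 0; 0, 0, 1; 0, 1, 1], !![1, 0, 1; 1, 1, 0; 1, 0, 0], !![1, 1, 0; 1, 1, 1; 1, 0, 0], 1]]

def aexp : Fin 8 → Fin 8 → ℕ :=
  ![ ![1, 4, 4, 2, 2, 4, 2, 4],
     ![2, 1, 4, 2, 4, 4, 2, 2],
     ![2, 2, 1, 4, 2, 4, 4, 2],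
     ![4, 4, 4, 1, 2, 4, 4, 2],
     ![4, 2, 4, 4, 1, 2, 2, 2],
     ![2, 2, 2, 2, 4, 1, 4, 4],
     ![4, 4, 2, 2, 4, 2, 1, 2],
     ![2, 4, 4, 4, 4, 2, 4, 1]]

def bexp : Fin 8 → Fin 8 → ℕ :=
  ![ ![1, 2, 2, 4, 4, 2, 4, 2],
     ![4, 1, 2, 4, 2, 2, 4, 4],
     ![4, 4, 1, 2, 4, 2, 2, 4],
     ![2, 2, 2, 1, 4, 2, 2, 4],
     ![2, 4, 2, 2, 1, 4, 4, 4],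
     ![4, 4, 4, 4, 2, 1, 2, 2],
     ![2, 2, 4, 4, 2, 4, 1, 4],
     ![4, 2, 2, 2, 2, 4, 2, 1]]

def vv : Fin 8 → Fin 8 → V3 :=
  ![ ![![0,0,0], ![1,1,1], ![1,0,1], ![0,0,1], ![0,1,0], ![1,0,0], ![0,1,1], ![1,1,0]],
     ![![1,1,1], ![0,0,0], ![0,1,0], ![1,1,0], ![1,0,1], ![0,1,1], ![1,0,0], ![0,0,1]],
     ![![1,0,1], ![0,1,0], ![0,0,0], ![1,0,0], ![1,1,1], ![0,0,1], ![1,1,0], ![0,1,1]],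
     ![![0,0,1], ![1,1,0], ![1,0,0], ![0,0,0], ![0,1,1], ![1,0,1], ![0,1,0], ![1,1,1]],
     ![![0,1,0], ![1,0,1], ![1,1,1], ![0,1,1], ![0,0,0], ![1,1,0], ![0,0,1], ![1,0,0]],
     ![![1,0,0], ![0,1,1], ![0,0,1], ![1,0,1], ![1,1,0], ![0,0,0], ![1,1,1], ![0,1,0]],
     ![![0,1,1], ![1,0,0], ![1,1,0], ![0,1,0], ![0,0,1], ![1,1,1], ![0,0,0], ![1,0,1]],
     ![![1,1,0], ![0,0,1], ![0,1,1], ![1,1,1], ![1,0,0], ![0,1,0], ![1,0,1], ![0,0,0]]]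

def powFun : Fin 8 → Fin 6 → Mat3 :=
  ![ ![!![0, 0, 1; 0, 1, 1; 1, 1, 0], !![1, 1, 0; 1, 0, 1; 0, 1, 0], !![0, 1, 0; 1, 1, 1; 0, 1, 1], !![0, 1, 1; 1, 0, 0; 1, 0, 1], !![1, 0, 1; 0, 0, 1; 1, 1, 1], !![1, 1, 1; 1, 1, 0; 1, 0, 0]],
     ![!![0, 0, 1; 0, 1, 1; 1, 1, 1], !![1, 1, 1; 1, 0, 0; 1, 0, 1], !![1, 0, 1; 0, 0, 1; 1, 1, 0], !![1, 1, 0; 1, 1, 1; 0, 1, 0], !![0, 1, 0; 1, 0, 1; 0, 1, 1], !![0, 1, 1; 1, 1, 0; 1, 0, 0]],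
     ![!![0, 0, 1; 1, 0, 0; 0, 1, 1], !![0, 1, 1; 0, 0, 1; 1, 1, 1], !![1, 1, 1; 0, 1, 1; 1, 1, 0], !![1, 1, 0; 1, 1, 1; 1, 0, 1], !![1, 0, 1; 1, 1, 0; 0, 1, 0], !![0, 1, 0; 1, 0, 1; 1, 0, 0]],
     ![!![0, 0, 1; 1, 0, 0; 1, 1, 0], !![1, 1, 0; 0, 0, 1; 1, 0, 1], !![1, 0, 1; 1, 1, 0; 1, 1, 1], !![1, 1, 1; 1, 0, 1; 0, 1, 1], !![0, 1, 1; 1, 1, 1; 0, 1, 0], !![0, 1, 0; 0, 1, 1; 1, 0, 0]],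
     ![!![0, 0, 1; 1, 0, 1; 0, 1, 0], !![0, 1, 0; 0, 1, 1; 1, 0, 1], !![1, 0, 1; 1, 1, 1; 0, 1, 1], !![0, 1, 1; 1, 1, 0; 1, 1, 1], !![1, 1, 1; 1, 0, 0; 1, 1, 0], !![1, 1, 0; 0, 0, 1; 1, 0, 0]],
     ![!![0, 0, 1; 1, 0, 1; 1, 1, 1], !![1, 1, 1; 1, 1, 0; 0, 1, 1], !![0, 1, 1; 1, 0, 0; 0, 1, 0], !![0, 1, 0; 0, 0, 1; 1, 0, 1], !![1, 0, 1; 1, 1, 1; 1, 1, 0], !![1, 1, 0; 0, 1, 1; 1, 0, 0]],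
     ![!![0, 0, 1; 1, 1, 0; 0, 1, 0], !![0, 1, 0; 1, 1, 1; 1, 1, 0], !![1, 1, 0; 1, 0, 1; 1, 1, 1], !![1, 1, 1; 0, 1, 1; 1, 0, 1], !![1, 0, 1; 1, 0, 0; 0, 1, 1], !![0, 1, 1; 0, 0, 1; 1, 0, 0]],
     ![!![0, 0, 1; 1, 1, 0; 0, 1, 1], !![0, 1, 1; 1, 1, 1; 1, 0, 1], !![1, 0, 1; 1, 0, 0; 0, 1, 0], !![0, 1, 0; 0, 0, 1; 1, 1, 0], !![1, 1, 0; 0, 1, 1; 1, 1, 1], !![1, 1, 1; 1, 0, 1; 1, 0, 0]]]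

theorem gpow7 : ∀ i : Fin 8, gmat i ^ 7 = 1 ∧ gmat i ≠ 1 := by decide

theorem powFun_eq : ∀ i : Fin 8, ∀ k : Fin 6, powFun i k = gmat i ^ ((k : ℕ) + 1) := by decide

theorem distinct8 : ∀ i j : Fin 8, i ≠ j → ∀ k : Fin 6, gmat j ≠ powFun i k := by decide

theorem tfacts : ∀ i j : Fin 8, i ≠ j →
    tmat i j ^ 3 = 1 ∧
    tmat i j * gmat i = gmat i ^ aexp i j * tmat i j ∧
    tmat i j * gmat j = gmat j ^ bexp i j * tmat i j := by decide

theorem vfacts : ∀ i j : Fin 8, i ≠ j →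
    (tmat i j).mulVec (vv i j) = vv i j ∧ vv i j ≠ 0 ∧
    ∀ w : V3, (tmat i j).mulVec w = w → w = 0 ∨ w = vv i j := by decide

theorem vdiag : ∀ i : Fin 8, vv i i = 0 := by decide

theorem chasles' : ∀ i j k : Fin 8, vv i j = vv i k + vv k j := by decide

set_option maxRecDepth 100000 in
set_option maxHeartbeats 4000000 in
theorem classify7 : ∀ m : Mat3, m ^ 7 = 1 → m = 1 ∨ ∃ i : Fin 8, ∃ k : Fin 6, m = powFun i k := by
  decide

/-- linear automorphism of `V3` from a matrix with a two-sided inverse -/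
def matEquiv (m n : Mat3) (h1 : m * n = 1) (h2 : n * m = 1) : V3 ≃ₗ[ZMod 2] V3 :=
  LinearEquiv.ofLinear (Matrix.toLin' m) (Matrix.toLin' n)
    (by rw [← Matrix.toLin'_mul, h1, Matrix.toLin'_one])
    (by rw [← Matrix.toLin'_mul, h2, Matrix.toLin'_one])

@[simp] theorem matEquiv_apply (m n : Mat3) (h1 h2) (w : V3) :
    matEquiv m n h1 h2 w = m.mulVec w := Matrix.toLin'_apply m w

theorem lmul_apply {R M : Type*} [CommRing R] [AddCommGroup M] [Module R M]
    (f g : M ≃ₗ[R] M) (x : M) : (f * g) x = f (g x) := rfl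

/-- the matrix of a linear automorphism, as a monoid hom -/
def θ : (V3 ≃ₗ[ZMod 2] V3) →* Mat3 where
  toFun f := LinearMap.toMatrix' (f : V3 →ₗ[ZMod 2] V3)
  map_one' := by simp
  map_mul' f g := by
    rw [LinearEquiv.coe_toLinearMap_mul, LinearMap.toMatrix'_mul]

theorem θ_inj : Function.Injective θ := fun f g h => by
  apply LinearEquiv.toLinearMap_injective
  exact LinearMap.toMatrix'.injective h

@[simp] theorem θ_matEquiv (m n : Mat3) (h1 h2) : θ (matEquiv m n h1 h2) = m :=
  LinearMap.toMatrix'_toLin' m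

/-- conjugation of automorphism groups by a linear equivalence -/
def conjEquiv {E : Type*} [AddCommGroup E] [Module (ZMod 2) E] (e : E ≃ₗ[ZMod 2] V3) :
    (E ≃ₗ[ZMod 2] E) ≃* (V3 ≃ₗ[ZMod 2] V3) where
  toFun f := (e.symm.trans f).trans e
  invFun F := (e.trans F).trans e.symm
  left_inv f := by ext x; simp [LinearEquiv.trans_apply]
  right_inv F := by ext x; simp [LinearEquiv.trans_apply]
  map_mul' f g := by
    apply LinearEquiv.ext
    intro x
    simp only [lmul_apply, LinearEquiv.trans_apply, LinearEquiv.symm_apply_apply]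

theorem conjEquiv_symm_apply {E : Type*} [AddCommGroup E] [Module (ZMod 2) E]
    (e : E ≃ₗ[ZMod 2] V3) (F : V3 ≃ₗ[ZMod 2] V3) (x : E) :
    (conjEquiv e).symm F x = e.symm (F (e x)) := rfl

/-- the generators of the eight subgroups of order 7, as linear automorphisms -/
def Gg (i : Fin 8) : V3 ≃ₗ[ZMod 2] V3 :=
  matEquiv (gmat i) (gmat i ^ 6)
    (by rw [← pow_succ' (gmat i) 6]; exact (gpow7 i).1)
    (by rw [← pow_succ (gmat i) 6]; exact (gpow7 i).1)

@[simp] theorem θ_Gg (i : Fin 8) : θ (Gg i) = gmat i := θ_matEquiv _ _ _ _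

/-- the order-3 elements in the intersections of normalizers -/
def Tt (i j : Fin 8) (hij : i ≠ j) : V3 ≃ₗ[ZMod 2] V3 :=
  matEquiv (tmat i j) (tmat i j ^ 2)
    (by rw [← pow_succ' (tmat i j) 2]; exact (tfacts i j hij).1)
    (by rw [← pow_succ (tmat i j) 2]; exact (tfacts i j hij).1)

@[simp] theorem θ_Tt (i j : Fin 8) (hij : i ≠ j) : θ (Tt i j hij) = tmat i j := θ_matEquiv _ _ _ _

/-- membership in the normalizer of `zpowers g` from a conjugation relation -/
theorem mem_norm_zpowers {G : Type*} [Group G] {t g : G} {a : ℕ}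
    (ht : t ^ 3 = 1) (h : t * g = g ^ a * t) : t ∈ Subgroup.normalizer ((Subgroup.zpowers g : Set G)) := by
  have hinv : t⁻¹ = t ^ 2 := by
    apply inv_eq_of_mul_eq_one_right
    rw [← pow_succ' t 2, ht]
  have hconj : t * g * t⁻¹ = g ^ a := by
    rw [h, mul_assoc, mul_inv_cancel, mul_one]
  have hconj' : t⁻¹ * g * t = g ^ (a * a) := by
    have e1 : t * (t * g * t⁻¹) * t⁻¹ = t⁻¹ * g * t := by
      calc t * (t * g * t⁻¹) * t⁻¹ = t ^ 2 * g * (t ^ 2)⁻¹ := by rw [pow_two]; group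
      _ = t⁻¹ * g * t⁻¹⁻¹ := by rw [← hinv]
      _ = t⁻¹ * g * t := by rw [inv_inv]
    rw [← e1, hconj, ← conj_pow, hconj, ← pow_mul]
  rw [Subgroup.mem_normalizer_iff]
  intro x
  constructor
  · intro hx
    obtain ⟨k, hk⟩ := Subgroup.mem_zpowers_iff.mp hx
    apply Subgroup.mem_zpowers_iff.mpr
    refine ⟨(a : ℤ) * k, ?_⟩
    rw [← hk]
    calc g ^ ((a : ℤ) * k) = (g ^ (a : ℤ)) ^ k := by rw [← zpow_mul]
    _ = (t * g * t⁻¹) ^ k := by rw [zpow_natCast, ← hconj]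
    _ = t * g ^ k * t⁻¹ := conj_zpow
  · intro hx
    obtain ⟨k, hk⟩ := Subgroup.mem_zpowers_iff.mp hx
    apply Subgroup.mem_zpowers_iff.mpr
    refine ⟨((a * a : ℕ) : ℤ) * k, ?_⟩
    have hx' : x = t⁻¹ * g ^ k * t := by rw [hk]; group
    rw [hx']
    calc g ^ (((a * a : ℕ) : ℤ) * k) = (g ^ ((a * a : ℕ) : ℤ)) ^ k := by rw [← zpow_mul]
    _ = (t⁻¹ * g * t) ^ k := by rw [zpow_natCast, ← hconj']
    _ = t⁻¹ * g ^ k * t := by simpa using conj_zpow (i := k) (a := t⁻¹) (b := g)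

@[simp] theorem Tt_apply (i j : Fin 8) (hij : i ≠ j) (w : V3) :
    Tt i j hij w = (tmat i j).mulVec w := matEquiv_apply _ _ _ _ w

theorem stmt_16 (E : Type*) [AddCommGroup E] [Module (ZMod 2) E]
    (hdim : Module.finrank (ZMod 2) E = 3)
    (vec : Subgroup (E ≃ₗ[ZMod 2] E) → Subgroup (E ≃ₗ[ZMod 2] E) → E)
    (hdiag : ∀ M, vec M M = 0)
    (hvec : ∀ M₁ M₂ : Subgroup (E ≃ₗ[ZMod 2] E), Nat.card M₁ = 7 → Nat.card M₂ = 7 → M₁ ≠ M₂ →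
      vec M₁ M₂ ≠ 0 ∧
      ∀ g ∈ Subgroup.normalizer (M₁ : Set (E ≃ₗ[ZMod 2] E)) ⊓ Subgroup.normalizer (M₂ : Set (E ≃ₗ[ZMod 2] E)), g (vec M₁ M₂) = vec M₁ M₂) :
    Nat.card {M : Subgroup (E ≃ₗ[ZMod 2] E) // Nat.card M = 7} = 8 ∧
    ∀ M M₁ M₂ : Subgroup (E ≃ₗ[ZMod 2] E),
      Nat.card M = 7 → Nat.card M₁ = 7 → Nat.card M₂ = 7 →
      vec M₁ M₂ = vec M₁ M + vec M M₂ := by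
  haveI : Fact (Nat.Prime 7) := ⟨by norm_num⟩
  haveI : Module.Finite (ZMod 2) E := Module.finite_of_finrank_eq_succ hdim
  haveI : Finite E := Module.finite_of_finite (ZMod 2)
  haveI : Finite (E ≃ₗ[ZMod 2] E) :=
    Finite.of_injective (fun f => (f : E → E)) DFunLike.coe_injective
  let e : E ≃ₗ[ZMod 2] V3 := (Module.finBasisOfFinrankEq (ZMod 2) E hdim).equivFun
  set Φ := conjEquiv e with hΦdef
  let ψ : (E ≃ₗ[ZMod 2] E) →* Mat3 := θ.comp Φ.toMonoidHom
  have ψapp : ∀ f, ψ f = θ (Φ f) := fun f => rfl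
  have ψinj : Function.Injective ψ := fun a b h => Φ.injective (θ_inj h)
  set y : Fin 8 → (E ≃ₗ[ZMod 2] E) := fun i => Φ.symm (Gg i) with hydef
  have ψy : ∀ i, ψ (y i) = gmat i := fun i => by
    rw [ψapp, hydef, MulEquiv.apply_symm_apply, θ_Gg]
  have ypow : ∀ i, (y i) ^ 7 = 1 := fun i =>
    ψinj (by rw [map_pow, ψy, map_one]; exact (gpow7 i).1)
  have yne : ∀ i, y i ≠ 1 := fun i h => (gpow7 i).2 (by rw [← ψy i, h, map_one])
  have yord : ∀ i, orderOf (y i) = 7 := fun i => orderOf_eq_prime (ypow i) (yne i)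
  set N : Fin 8 → Subgroup (E ≃ₗ[ZMod 2] E) := fun i => Subgroup.zpowers (y i) with hNdef
  have cardN : ∀ i, Nat.card (N i) = 7 := fun i => by
    rw [hNdef]; rw [Nat.card_zpowers, yord]
  -- classification of elements of order dividing 7
  have memN : ∀ x : E ≃ₗ[ZMod 2] E, x ^ 7 = 1 → x ≠ 1 →
      ∃ i : Fin 8, ∃ k : ℕ, k ≠ 0 ∧ k < 7 ∧ x = (y i) ^ k := by
    intro x hx7 hx1
    have hm7 : (ψ x) ^ 7 = 1 := by rw [← map_pow, hx7, map_one]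
    rcases classify7 (ψ x) hm7 with h1 | ⟨i, k, hk⟩
    · exact absurd (ψinj (by rw [h1, map_one])) hx1
    · refine ⟨i, (k : ℕ) + 1, Nat.succ_ne_zero _, by have := k.isLt; omega, ?_⟩
      apply ψinj
      rw [map_pow, ψy, ← powFun_eq i k, hk]
  have Ninj : Function.Injective N := by
    intro i j hij
    by_contra hne
    have hyj : y j ∈ N i := hij ▸ Subgroup.mem_zpowers (y j)
    have hfin : IsOfFinOrder (y i) :=
      isOfFinOrder_iff_pow_eq_one.mpr ⟨7, by norm_num, ypow i⟩
    obtain ⟨n, hn⟩ := (Submonoid.mem_powers_iff _ _).mp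
      (hfin.mem_powers_iff_mem_zpowers.mpr hyj)
    have hmod : (y i) ^ (n % 7) = y j := by
      rw [← hn, ← yord i]; exact pow_mod_orderOf (y i) n
    rcases Nat.eq_zero_or_pos (n % 7) with h0 | hpos
    · rw [h0, pow_zero] at hmod; exact yne j hmod.symm
    · have hlt : n % 7 < 7 := Nat.mod_lt _ (by norm_num)
      have hk : n % 7 - 1 < 6 := by omega
      apply distinct8 i j hne ⟨n % 7 - 1, hk⟩
      rw [powFun_eq]
      have : ((⟨n % 7 - 1, hk⟩ : Fin 6) : ℕ) + 1 = n % 7 := by simp; omega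
      rw [this, ← ψy j, ← hmod, map_pow, ψy]
  have exN : ∀ M : Subgroup (E ≃ₗ[ZMod 2] E), Nat.card M = 7 → ∃ i, M = N i := by
    intro M hM
    haveI : Nontrivial M := (Finite.one_lt_card_iff_nontrivial (α := M)).mp (by rw [hM]; norm_num)
    obtain ⟨x, hx1⟩ := exists_ne (1 : M)
    have hxG1 : (x : E ≃ₗ[ZMod 2] E) ≠ 1 := by
      simpa using hx1
    have hord : orderOf (x : E ≃ₗ[ZMod 2] E) = 7 := by
      rw [Subgroup.orderOf_coe]
      have h1 : orderOf x ∣ 7 := hM ▸ orderOf_dvd_natCard x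
      have h2 : orderOf x ≠ 1 := by simpa [orderOf_eq_one_iff] using hx1
      rcases (Nat.Prime.eq_one_or_self_of_dvd (by norm_num) _ h1) with h | h
      · exact absurd h h2
      · exact h
    obtain ⟨i, k, hk0, hk7, hxk⟩ := memN (x : E ≃ₗ[ZMod 2] E)
      (by rw [← hord]; exact pow_orderOf_eq_one _) hxG1
    have hle1 : Subgroup.zpowers (x : E ≃ₗ[ZMod 2] E) ≤ M := Subgroup.zpowers_le.mpr x.2
    have hle2 : Subgroup.zpowers (x : E ≃ₗ[ZMod 2] E) ≤ N i := by
      apply Subgroup.zpowers_le.mpr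
      rw [hxk]
      exact Subgroup.pow_mem _ (Subgroup.mem_zpowers _) k
    have hcard : Nat.card (Subgroup.zpowers (x : E ≃ₗ[ZMod 2] E)) = 7 := by
      rw [Nat.card_zpowers, hord]
    have e1 : Subgroup.zpowers (x : E ≃ₗ[ZMod 2] E) = M :=
      Subgroup.eq_of_le_of_card_ge hle1 (by rw [hM, hcard])
    have e2 : Subgroup.zpowers (x : E ≃ₗ[ZMod 2] E) = N i :=
      Subgroup.eq_of_le_of_card_ge hle2 (by rw [cardN, hcard])
    exact ⟨i, e1.symm.trans e2⟩
  -- cardinality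
  have card8 : Nat.card {M : Subgroup (E ≃ₗ[ZMod 2] E) // Nat.card M = 7} = 8 := by
    have hbij : Function.Bijective
        (fun i : Fin 8 => (⟨N i, cardN i⟩ : {M : Subgroup (E ≃ₗ[ZMod 2] E) // Nat.card M = 7})) := by
      constructor
      · intro i j h
        exact Ninj (congrArg Subtype.val h)
      · rintro ⟨M, hM⟩
        obtain ⟨i, rfl⟩ := exN M hM
        exact ⟨i, rfl⟩
    have := Nat.card_congr (Equiv.ofBijective _ hbij)
    simpa using this.symm
  -- normalizer membership of the order-3 elements
  have tmemN : ∀ i j, ∀ hij : i ≠ j,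
      Φ.symm (Tt i j hij) ∈ Subgroup.normalizer (N i : Set (E ≃ₗ[ZMod 2] E)) ⊓ Subgroup.normalizer (N j : Set (E ≃ₗ[ZMod 2] E)) := by
    intro i j hij
    have ψt : ψ (Φ.symm (Tt i j hij)) = tmat i j := by
      rw [ψapp, MulEquiv.apply_symm_apply, θ_Tt]
    have ht3 : (Φ.symm (Tt i j hij)) ^ 3 = 1 := by
      apply ψinj
      rw [map_pow, ψt, map_one]
      exact (tfacts i j hij).1
    have hti : Φ.symm (Tt i j hij) * y i = (y i) ^ (aexp i j) * Φ.symm (Tt i j hij) := by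
      apply ψinj
      rw [map_mul, map_mul, map_pow, ψt, ψy]
      exact (tfacts i j hij).2.1
    have htj : Φ.symm (Tt i j hij) * y j = (y j) ^ (bexp i j) * Φ.symm (Tt i j hij) := by
      apply ψinj
      rw [map_mul, map_mul, map_pow, ψt, ψy]
      exact (tfacts i j hij).2.2
    exact ⟨mem_norm_zpowers ht3 hti, mem_norm_zpowers ht3 htj⟩
  -- identification of vec
  have vecEq : ∀ i j : Fin 8, vec (N i) (N j) = e.symm (vv i j) := by
    intro i j
    by_cases hij : i = j
    · subst hij
      rw [hdiag, vdiag, map_zero]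
    · have hNe : N i ≠ N j := fun h => hij (Ninj h)
      obtain ⟨hne0, hfix⟩ := hvec (N i) (N j) (cardN i) (cardN j) hNe
      have hf : Φ.symm (Tt i j hij) (vec (N i) (N j)) = vec (N i) (N j) :=
        hfix (Φ.symm (Tt i j hij)) (tmemN i j hij)
      have hf1 : e.symm ((tmat i j).mulVec (e (vec (N i) (N j)))) = vec (N i) (N j) := by
        rw [← Tt_apply i j hij]
        exact hf
      have hf2 : (tmat i j).mulVec (e (vec (N i) (N j))) = e (vec (N i) (N j)) := by
        conv_rhs => rw [← hf1]
        rw [e.apply_symm_apply]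
      rcases (vfacts i j hij).2.2 _ hf2 with h0 | hv
      · exact absurd (e.map_eq_zero_iff.mp h0) hne0
      · rw [← hv, e.symm_apply_apply]
  refine ⟨card8, ?_⟩
  intro M M₁ M₂ hM hM₁ hM₂
  obtain ⟨k, rfl⟩ := exN M hM
  obtain ⟨i, rfl⟩ := exN M₁ hM₁
  obtain ⟨j, rfl⟩ := exN M₂ hM₂
  rw [vecEq i j, vecEq i k, vecEq k j, ← map_add]
  exact congrArg e.symm (chasles' i j k)
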